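/- Let E be a Banach space, U an open subset of [0,∞)^s × E, and f : U → ℝ^n a C¹ map. Suppose x ∈ U lies in the maximally degenerate corner {0}^s × E and the restriction of the derivative d_x f to {0}^s × E is surjective onto ℝ^n. Then for K := ker((d_x f)|_{{0}^s × E}), K has a closed complement L in E, and for any such complement the map g(v,e) = (f(v,e), v, pr(e)), where pr : E = K ⊕ L → K is the projection along L, restricts to a C¹-diffeomorphism from an open neighborhood of x in U onto an open subset of ℝ^n × [0,∞)^s × K. -/

import Mathlib

open Set Metric Filter Topology Asymptotics ContinuousLinearMap

open Set Metric Filter Topology Asymptotics ContinuousLinearMap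

lemma newton_solve {F G : Type*} [NormedAddCommGroup F] [NormedSpace ℝ F] [CompleteSpace F]
    [NormedAddCommGroup G] [NormedSpace ℝ G]
    (g : F → G) (A : F →L[ℝ] G) (B : G →L[ℝ] F)
    {c : ℝ} (hc : c * ‖B‖ ≤ 1/2) (hc0 : 0 ≤ c)
    (R : Set F) (hR : IsClosed R) (q : G) (p₀ : F) (hp₀ : p₀ ∈ R)
    (happrox : ∀ p ∈ closedBall p₀ (2*‖B‖*‖g p₀ - q‖) ∩ R,
        ∀ p' ∈ closedBall p₀ (2*‖B‖*‖g p₀ - q‖) ∩ R,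
        ‖g p' - g p - A (p' - p)‖ ≤ c * ‖p' - p‖)
    (hgcont : ContinuousOn g (closedBall p₀ (2*‖B‖*‖g p₀ - q‖) ∩ R))
    (hstep : ∀ p ∈ R, p - B (g p - q) ∈ R)
    (hABq : ∀ p ∈ R, A (B (g p - q)) = g p - q) :
    ∃ p ∈ closedBall p₀ (2*‖B‖*‖g p₀ - q‖) ∩ R, g p = q := by
  set d := ‖g p₀ - q‖ with hd
  have hd0 : 0 ≤ d := norm_nonneg _
  have hB0 : (0:ℝ) ≤ ‖B‖ := norm_nonneg _
  set seq : ℕ → F := fun n => Nat.rec p₀ (fun _ p => p - B (g p - q)) n with hseq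
  have seq_zero : seq 0 = p₀ := rfl
  have seq_succ : ∀ n, seq (n+1) = seq n - B (g (seq n) - q) := fun n => rfl
  set S : Set F := closedBall p₀ (2*‖B‖*d) ∩ R with hS
  have key : ∀ n, seq n ∈ R ∧ ‖seq n - p₀‖ ≤ 2*‖B‖*(1 - (1/2)^n)*d ∧
      ‖g (seq n) - q‖ ≤ (1/2)^n * d := by
    intro n
    induction n with
    | zero => exact ⟨hp₀, by simp [seq_zero], by simp [seq_zero, hd]⟩
    | succ n ih =>
      obtain ⟨hmem, hdist, hres⟩ := ih
      have hpow : (0:ℝ) < (1/2)^n := by positivity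
      have hpow1 : ((1:ℝ)/2)^n ≤ 1 := pow_le_one₀ (by norm_num) (by norm_num)
      have hmemS : seq n ∈ S := by
        refine ⟨mem_closedBall_iff_norm.2 (hdist.trans ?_), hmem⟩
        nlinarith [mul_nonneg (mul_nonneg hB0 hd0) hpow.le]
      have hstepnorm : ‖seq (n+1) - seq n‖ ≤ ‖B‖ * ((1/2)^n * d) := by
        rw [seq_succ, sub_sub_cancel_left, norm_neg]
        exact (B.le_opNorm _).trans (by gcongr)
      have hdist' : ‖seq (n+1) - p₀‖ ≤ 2*‖B‖*(1 - (1/2)^(n+1))*d :=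
        calc ‖seq (n+1) - p₀‖ ≤ ‖seq (n+1) - seq n‖ + ‖seq n - p₀‖ :=
              norm_sub_le_norm_sub_add_norm_sub _ _ _
          _ ≤ ‖B‖ * ((1/2)^n * d) + 2*‖B‖*(1 - (1/2)^n)*d := add_le_add hstepnorm hdist
          _ = 2*‖B‖*(1 - (1/2)^(n+1))*d := by ring
      have hmem' : seq (n+1) ∈ R := by
        rw [seq_succ]; exact hstep _ hmem
      have hmemS' : seq (n+1) ∈ S := by
        have hpow' : (0:ℝ) < (1/2)^(n+1) := by positivity
        refine ⟨mem_closedBall_iff_norm.2 (hdist'.trans ?_), hmem'⟩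
        nlinarith [mul_nonneg (mul_nonneg hB0 hd0) hpow'.le]
      refine ⟨hmem', hdist', ?_⟩
      have heq : g (seq (n+1)) - q
          = g (seq (n+1)) - g (seq n) - A (seq (n+1) - seq n) := by
        have h1 : seq (n+1) - seq n = -(B (g (seq n) - q)) := by
          rw [seq_succ]; abel
        rw [h1, map_neg, hABq _ hmem]; abel
      calc ‖g (seq (n+1)) - q‖ = ‖g (seq (n+1)) - g (seq n) - A (seq (n+1) - seq n)‖ := by
            rw [heq]
        _ ≤ c * ‖seq (n+1) - seq n‖ := happrox _ hmemS _ hmemS'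
        _ ≤ c * (‖B‖ * ((1/2)^n * d)) := by gcongr
        _ = (c * ‖B‖) * ((1/2)^n * d) := by ring
        _ ≤ (1/2) * ((1/2)^n * d) := by
            exact mul_le_mul_of_nonneg_right hc (by positivity)
        _ = (1/2)^(n+1) * d := by ring
  have hmemS : ∀ n, seq n ∈ S := by
    intro n
    obtain ⟨h1, h2, _⟩ := key n
    have hpow : (0:ℝ) < (1/2)^n := by positivity
    refine ⟨mem_closedBall_iff_norm.2 (h2.trans ?_), h1⟩
    nlinarith [mul_nonneg (mul_nonneg hB0 hd0) hpow.le]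
  have hcauchy : CauchySeq seq := by
    apply cauchySeq_of_le_geometric (1/2) (‖B‖ * d) (by norm_num)
    intro n
    rw [dist_eq_norm]
    have : ‖seq n - seq (n+1)‖ = ‖seq (n+1) - seq n‖ := norm_sub_rev _ _
    rw [this]
    have hstepnorm : ‖seq (n+1) - seq n‖ ≤ ‖B‖ * ((1/2)^n * d) := by
      rw [seq_succ, sub_sub_cancel_left, norm_neg]
      exact (B.le_opNorm _).trans (by gcongr; exact (key n).2.2)
    calc ‖seq (n+1) - seq n‖ ≤ ‖B‖ * ((1/2)^n * d) := hstepnorm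
      _ = ‖B‖ * d * (1/2)^n := by ring
  obtain ⟨p, hp⟩ := cauchySeq_tendsto_of_complete hcauchy
  have hpS : p ∈ S := (Metric.isClosed_closedBall.inter hR).mem_of_tendsto hp
    (Filter.Eventually.of_forall hmemS)
  refine ⟨p, hpS, ?_⟩
  have t1 : Tendsto (fun n => g (seq n)) atTop (𝓝 (g p)) :=
    (hgcont p hpS).tendsto.comp (tendsto_nhdsWithin_iff.mpr ⟨hp, Eventually.of_forall hmemS⟩)
  have t2 : Tendsto (fun n => g (seq n)) atTop (𝓝 q) := by
    rw [tendsto_iff_dist_tendsto_zero]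
    refine squeeze_zero (g := fun n : ℕ => (1/2:ℝ)^n * d) (fun n => dist_nonneg)
      (fun n => by rw [dist_eq_norm]; exact (key n).2.2) ?_
    have : Tendsto (fun n : ℕ => (1/2:ℝ)^n * d) atTop (𝓝 (0 * d)) :=
      (tendsto_pow_atTop_nhds_zero_of_lt_one (by norm_num) (by norm_num)).mul_const d
    simpa using this
  exact tendsto_nhds_unique t1 t2

lemma exists_open_inter {X : Type*} [PseudoMetricSpace X] (T s : Set X) (hsub : s ⊆ T)
    (h : ∀ q ∈ s, ∃ δ > 0, ball q δ ∩ T ⊆ s) : ∃ W, IsOpen W ∧ s = W ∩ T := by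
  choose δ hδpos hδsub using h
  refine ⟨⋃ (q : X) (hq : q ∈ s), ball q (δ q hq), isOpen_iUnion fun q => isOpen_iUnion
    fun hq => isOpen_ball, ?_⟩
  apply Subset.antisymm
  · intro q hq
    exact ⟨mem_iUnion.2 ⟨q, mem_iUnion.2 ⟨hq, mem_ball_self (hδpos q hq)⟩⟩, hsub hq⟩
  · rintro y ⟨hy, hyT⟩
    obtain ⟨q, hq⟩ := mem_iUnion.1 hy
    obtain ⟨hqs, hyq⟩ := mem_iUnion.1 hq
    exact hδsub q hqs ⟨hyq, hyT⟩


set_option maxHeartbeats 1000000 in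
lemma quadrant_ift {F G : Type*} [NormedAddCommGroup F] [NormedSpace ℝ F] [CompleteSpace F]
    [NormedAddCommGroup G] [NormedSpace ℝ G]
    (Q : Set F) (hQconv : Convex ℝ Q) (hQclosed : IsClosed Q)
    (U : Set F) (hUQ : U ⊆ Q) (V₀ : Set F) (hV₀open : IsOpen V₀) (hUV₀ : U = V₀ ∩ Q)
    (hUuD : UniqueDiffOn ℝ U)
    (g : F → G) (hg : ContDiffOn ℝ 1 g U)
    (x : F) (hxU : x ∈ U)
    (A : F →L[ℝ] G) (hgA : HasFDerivWithinAt g A U x)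
    (B : G →L[ℝ] F) (hBA : ∀ p, B (A p) = p)
    (Q' : Set G) (hgQ' : ∀ p ∈ Q, g p ∈ Q')
    (hstep : ∀ q ∈ Q', ∀ p ∈ Q, p - B (g p - q) ∈ Q)
    (hABg : ∀ q ∈ Q', ∀ p : F, A (B (g p - q)) = g p - q) :
    ∃ (Uhat : Set F) (U' : Set G) (h : G → F),
      x ∈ Uhat ∧ Uhat ⊆ U ∧ (∃ V, IsOpen V ∧ Uhat = V ∩ Q) ∧
      U' ⊆ Q' ∧ (∃ W, IsOpen W ∧ U' = W ∩ Q') ∧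
      Set.BijOn g Uhat U' ∧ ContDiffOn ℝ 1 g Uhat ∧ ContDiffOn ℝ 1 h U' ∧
      (∀ p ∈ Uhat, h (g p) = p) ∧ (∀ q ∈ U', g (h q) = q) := by
  classical
  have : Nonempty F := ⟨0⟩
  have hxQ : x ∈ Q := hUQ hxU
  have hxV₀ : x ∈ V₀ := by rw [hUV₀] at hxU; exact hxU.1
  have hgdiff : ∀ y ∈ U, HasFDerivWithinAt g (fderivWithin ℝ g U y) U y := fun y hy =>
    ((hg.differentiableOn one_ne_zero) y hy).hasFDerivWithinAt
  set D : F → F →L[ℝ] G := fderivWithin ℝ g U with hDdef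
  have hDx : D x = A := hgA.fderivWithin (hUuD x hxU)
  have hDcont : ContinuousOn D U := hg.continuousOn_fderivWithin hUuD le_rfl
  set c : ℝ := (2 * (‖B‖ + 1))⁻¹ with hcdef
  have hB0 : (0:ℝ) ≤ ‖B‖ := norm_nonneg _
  have hc0 : 0 < c := by rw [hcdef]; positivity
  have hcB : c * ‖B‖ ≤ 1/2 := by
    have h2 : c * (2 * (‖B‖ + 1)) = 1 := by
      rw [hcdef]; exact inv_mul_cancel₀ (by positivity)
    nlinarith
  obtain ⟨ε', hε'0, hε'⟩ := Metric.continuousWithinAt_iff.1 (hDcont x hxU) c hc0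
  obtain ⟨ε₁, hε₁0, hball₁⟩ := Metric.isOpen_iff.1 hV₀open x hxV₀
  set ε : ℝ := min (ε₁/2) (ε'/2) with hεdef
  have hε0 : 0 < ε := lt_min (by positivity) (by positivity)
  have hεV₀ : closedBall x ε ⊆ V₀ := by
    refine subset_trans (closedBall_subset_ball ?_) hball₁
    calc ε ≤ ε₁/2 := min_le_left _ _
      _ < ε₁ := by linarith
  set sε : Set F := closedBall x ε ∩ Q with hsεdef
  have hsεU : sε ⊆ U := by
    rintro y ⟨hy1, hy2⟩
    rw [hUV₀]; exact ⟨hεV₀ hy1, hy2⟩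
  have hDbound : ∀ y ∈ sε, ‖D y - A‖ ≤ c := by
    intro y hy
    have hyU := hsεU hy
    have hdist : dist y x < ε' := by
      have h1 : dist y x ≤ ε := mem_closedBall.1 hy.1
      have h2 : ε ≤ ε'/2 := min_le_right _ _
      linarith
    have hlt := hε' hyU hdist
    rw [hDx, dist_eq_norm] at hlt
    exact hlt.le
  have hsεconv : Convex ℝ sε := (convex_closedBall x ε).inter hQconv
  have happroxε : ∀ p ∈ sε, ∀ p' ∈ sε, ‖g p' - g p - A (p' - p)‖ ≤ c * ‖p' - p‖ := by
    intro p hp p' hp'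
    have key := Convex.norm_image_sub_le_of_norm_hasFDerivWithin_le
      (f := fun y => g y - A y) (f' := fun y => D y - A) (C := c) (s := sε)
      (fun y hy => ((hgdiff y (hsεU hy)).mono hsεU).sub (A.hasFDerivWithinAt))
      (fun y hy => hDbound y hy) hsεconv hp hp'
    have heq : g p' - A p' - (g p - A p) = g p' - g p - A (p' - p) := by
      rw [map_sub]; abel
    rwa [heq] at key
  have hinj2 : ∀ p ∈ sε, ∀ p' ∈ sε, ‖p' - p‖ ≤ 2 * ‖B‖ * ‖g p' - g p‖ := by
    intro p hp p' hp'
    have h1 : ‖A (p' - p)‖ ≤ ‖g p' - g p‖ + c * ‖p' - p‖ := by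
      have e : A (p' - p) = (g p' - g p) - (g p' - g p - A (p' - p)) := by abel
      rw [e]
      exact (norm_sub_le _ _).trans (add_le_add le_rfl (happroxε p hp p' hp'))
    have h2 : ‖p' - p‖ ≤ ‖B‖ * ‖A (p' - p)‖ := by
      calc ‖p' - p‖ = ‖B (A (p' - p))‖ := by rw [hBA]
        _ ≤ ‖B‖ * ‖A (p' - p)‖ := B.le_opNorm _
    nlinarith [norm_nonneg (p' - p), norm_nonneg (g p' - g p),
      mul_le_mul_of_nonneg_left h1 hB0,
      mul_le_mul_of_nonneg_right hcB (norm_nonneg (p' - p))]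
  set Uhat : Set F := ball x ε ∩ Q with hUhatdef
  have hUhat_sε : Uhat ⊆ sε := inter_subset_inter_left _ ball_subset_closedBall
  have hUhatU : Uhat ⊆ U := subset_trans hUhat_sε hsεU
  have hxUhat : x ∈ Uhat := ⟨mem_ball_self hε0, hxQ⟩
  set U' : Set G := g '' Uhat with hU'def
  have hU'Q' : U' ⊆ Q' := by rintro z ⟨p, hp, rfl⟩; exact hgQ' p hp.2
  have hclaim : ∀ p₀ ∈ Uhat, ∀ q ∈ Q',
      ‖g p₀ - q‖ < (ε - dist p₀ x) / (2*‖B‖+1) → q ∈ U' := by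
    intro p₀ hp₀ q hq hlt
    have hr'0 : 0 < ε - dist p₀ x := by
      have := mem_ball.1 hp₀.1; linarith
    have hd0 : (0:ℝ) ≤ ‖g p₀ - q‖ := norm_nonneg _
    have hdr : ‖g p₀ - q‖ * (2*‖B‖+1) < ε - dist p₀ x :=
      (lt_div_iff₀ (by positivity)).1 hlt
    have h2Bd : 2*‖B‖*‖g p₀ - q‖ < ε - dist p₀ x := by nlinarith
    have hsub : closedBall p₀ (2*‖B‖*‖g p₀ - q‖) ∩ Q ⊆ sε := by
      rintro y ⟨hy1, hy2⟩
      refine ⟨?_, hy2⟩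
      rw [mem_closedBall] at hy1 ⊢
      have ht : dist y x ≤ dist y p₀ + dist p₀ x := dist_triangle _ _ _
      linarith
    obtain ⟨p, hpmem, hgp⟩ := newton_solve g A B hcB hc0.le Q hQclosed q p₀ hp₀.2
      (fun p hp p' hp' => happroxε p (hsub hp) p' (hsub hp'))
      (hg.continuousOn.mono (subset_trans hsub hsεU))
      (fun p hp => hstep q hq p hp)
      (fun p _ => hABg q hq p)
    have hpball : p ∈ ball x ε := by
      rw [mem_ball]
      have h1 : dist p p₀ ≤ 2*‖B‖*‖g p₀ - q‖ := mem_closedBall.1 hpmem.1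
      have ht : dist p x ≤ dist p p₀ + dist p₀ x := dist_triangle _ _ _
      linarith
    exact ⟨p, ⟨hpball, hpmem.2⟩, hgp⟩
  have hU'open : ∃ W, IsOpen W ∧ U' = W ∩ Q' := by
    apply exists_open_inter Q' U' hU'Q'
    rintro z ⟨p₀, hp₀, rfl⟩
    have hr'0 : 0 < ε - dist p₀ x := by
      have := mem_ball.1 hp₀.1; linarith
    refine ⟨(ε - dist p₀ x) / (2*‖B‖+1), by positivity, ?_⟩
    rintro q ⟨hq1, hq2⟩
    apply hclaim p₀ hp₀ q hq2
    rw [mem_ball, dist_comm, dist_eq_norm] at hq1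
    exact hq1
  have hinjOn : InjOn g Uhat := by
    intro p hp p' hp' hgpp
    have hle := hinj2 p (hUhat_sε hp) p' (hUhat_sε hp')
    rw [hgpp, sub_self, norm_zero, mul_zero] at hle
    have h0 : p' - p = 0 := norm_le_zero_iff.1 hle
    have h0' : p' = p := by rwa [sub_eq_zero] at h0
    exact h0'.symm
  have hBij : Set.BijOn g Uhat U' := hinjOn.bijOn_image
  set h : G → F := Function.invFunOn g Uhat with hhdef
  have hleft : ∀ p ∈ Uhat, h (g p) = p := fun p hp => hinjOn.leftInvOn_invFunOn hp
  have hmapsTo : MapsTo h U' Uhat := hBij.surjOn.mapsTo_invFunOn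
  have hright : ∀ q ∈ U', g (h q) = q := fun q hq => hBij.surjOn.rightInvOn_invFunOn hq
  have hdisth : ∀ q ∈ U', ∀ q' ∈ U', dist (h q') (h q) ≤ 2*‖B‖ * dist q' q := by
    intro q hq q' hq'
    rw [dist_eq_norm, dist_eq_norm]
    have hle := hinj2 (h q) (hUhat_sε (hmapsTo hq)) (h q') (hUhat_sε (hmapsTo hq'))
    rwa [hright q hq, hright q' hq'] at hle
  have hhcont : ContinuousOn h U' := by
    apply LipschitzOnWith.continuousOn (K := Real.toNNReal (2*‖B‖))
    apply LipschitzOnWith.of_dist_le_mul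
    intro q hq q' hq'
    rw [Real.coe_toNNReal _ (by positivity)]
    exact hdisth q' hq' q hq
  have honeBA : (1 : F →L[ℝ] F) = B.comp A := by
    apply ContinuousLinearMap.ext
    intro p
    simp [ContinuousLinearMap.comp_apply, hBA p]
  have hBDnorm : ∀ p ∈ sε, ‖(1 : F →L[ℝ] F) - B.comp (D p)‖ ≤ 1/2 := by
    intro p hp
    have h1 : (1 : F →L[ℝ] F) - B.comp (D p) = B.comp (A - D p) := by
      rw [ContinuousLinearMap.comp_sub, ← honeBA]
    rw [h1]
    calc ‖B.comp (A - D p)‖ ≤ ‖B‖ * ‖A - D p‖ := ContinuousLinearMap.opNorm_comp_le _ _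
      _ ≤ ‖B‖ * c := by
          gcongr
          rw [norm_sub_rev]
          exact hDbound p hp
      _ ≤ 1/2 := by rw [mul_comm]; exact hcB
  have hunit : ∀ p ∈ sε, IsUnit (B.comp (D p)) := by
    intro p hp
    have hlt : ‖(1 : F →L[ℝ] F) - B.comp (D p)‖ < 1 :=
      lt_of_le_of_lt (hBDnorm p hp) (by norm_num)
    refine ⟨Units.oneSub ((1 : F →L[ℝ] F) - B.comp (D p)) hlt, ?_⟩
    show 1 - (1 - B.comp (D p)) = B.comp (D p)
    abel
  set Binv : G → G →L[ℝ] F := fun q => (Ring.inverse (B.comp (D (h q)))).comp B with hBinvdef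
  have hBinvD : ∀ q ∈ U', ∀ v, (Binv q) ((D (h q)) v) = v := by
    intro q hq v
    have hu := hunit (h q) (hUhat_sε (hmapsTo hq))
    have hmul := Ring.inverse_mul_cancel _ hu
    have happ := congrArg (fun (S : F →L[ℝ] F) => S v) hmul
    simpa [hBinvdef, ContinuousLinearMap.mul_apply, ContinuousLinearMap.comp_apply,
      ContinuousLinearMap.one_apply] using happ
  have hhderiv : ∀ q ∈ U', HasFDerivWithinAt h (Binv q) U' q := by
    intro q hq
    have hpUhat : h q ∈ Uhat := hmapsTo hq
    have hpU : h q ∈ U := hUhatU hpUhat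
    have hgq : g (h q) = q := hright q hq
    have htend : Tendsto h (𝓝[U'] q) (𝓝[U] (h q)) := by
      have h1 : Tendsto h (𝓝[U'] q) (𝓝[Uhat] (h q)) :=
        (hhcont q hq).tendsto_nhdsWithin hmapsTo
      exact h1.mono_right (nhdsWithin_mono _ hUhatU)
    have o1 : (fun p' => g p' - g (h q) - (D (h q)) (p' - h q)) =o[𝓝[U] (h q)]
        (fun p' => p' - h q) := (hgdiff (h q) hpU).isLittleO
    have o2 := o1.comp_tendsto htend
    have bigO : (fun q' => h q' - h q) =O[𝓝[U'] q] (fun q' => q' - q) := by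
      rw [Asymptotics.isBigO_iff]
      refine ⟨2*‖B‖, ?_⟩
      filter_upwards [self_mem_nhdsWithin] with q' hq'
      have hle := hinj2 (h q) (hUhat_sε hpUhat) (h q') (hUhat_sε (hmapsTo hq'))
      rwa [hright q' hq', hgq] at hle
    have o3 := o2.trans_isBigO bigO
    have o4 := (ContinuousLinearMap.isBigO_comp (Binv q)
      (fun q' => g (h q') - g (h q) - (D (h q)) (h q' - h q)) (𝓝[U'] q)).trans_isLittleO o3
    apply HasFDerivWithinAt.of_isLittleO
    have heq : ∀ q' ∈ U', h q' - h q - (Binv q) (q' - q)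
        = -((Binv q) (g (h q') - g (h q) - (D (h q)) (h q' - h q))) := by
      intro q' hq'
      have e1 : q' - q = g (h q') - g (h q) := by rw [hright q' hq', hgq]
      rw [e1]
      have e2 : (Binv q) (g (h q') - g (h q))
          = (Binv q) (g (h q') - g (h q) - (D (h q)) (h q' - h q)) + (h q' - h q) := by
        nth_rewrite 2 [← hBinvD q hq (h q' - h q)]
        rw [← map_add]
        congr 1
        abel
      rw [e2]
      abel
    refine o4.neg_left.congr' ?_ EventuallyEq.rfl
    filter_upwards [self_mem_nhdsWithin] with q' hq'
    exact (heq q' hq').symm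
  have hBinvCont : ContinuousOn Binv U' := by
    have h1 : ContinuousOn (fun q => D (h q)) U' :=
      hDcont.comp hhcont (fun q hq => hUhatU (hmapsTo hq))
    have h2 : ContinuousOn (fun q => B.comp (D (h q))) U' :=
      ((ContinuousLinearMap.compL ℝ F G F) B).continuous.comp_continuousOn h1
    have h3 : ContinuousOn (fun q => Ring.inverse (B.comp (D (h q)))) U' := by
      intro q hq
      have hu := hunit (h q) (hUhat_sε (hmapsTo hq))
      have hca : ContinuousAt Ring.inverse (B.comp (D (h q))) := by
        have hcau := NormedRing.inverse_continuousAt hu.unit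
        rwa [IsUnit.unit_spec] at hcau
      have htd : Tendsto (fun q' => B.comp (D (h q'))) (𝓝[U'] q) (𝓝 (B.comp (D (h q)))) :=
        h2 q hq
      exact hca.tendsto.comp htd
    exact (((ContinuousLinearMap.compL ℝ G F F).flip B).continuous).comp_continuousOn h3
  have hhC1 : ContDiffOn ℝ 1 h U' := by
    have e1 : (1 : WithTop ℕ∞) = 0 + 1 := by norm_num
    rw [e1, contDiffOn_succ_iff_hasFDerivWithinAt (by simp)]
    intro q hq
    refine ⟨U', ?_, ?_, Binv, fun y hy => hhderiv y hy, ?_⟩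
    · rw [insert_eq_of_mem hq]; exact self_mem_nhdsWithin
    · intro h0; simp at h0
    · rw [contDiffOn_zero]; exact hBinvCont
  exact ⟨Uhat, U', h, hxUhat, hUhatU, ⟨ball x ε, isOpen_ball, rfl⟩, hU'Q', hU'open, hBij,
    hg.mono hUhatU, hhC1, hleft, hright⟩

set_option maxHeartbeats 4000000 in
theorem stmt0 {E : Type*} [NormedAddCommGroup E] [NormedSpace ℝ E] [CompleteSpace E]
    {s n : ℕ}
    (Q : Set ((Fin s → ℝ) × E)) (hQ : Q = {p | ∀ i, 0 ≤ p.1 i})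
    (U : Set ((Fin s → ℝ) × E)) (hUQ : U ⊆ Q)
    (hUopen : ∃ V, IsOpen V ∧ U = V ∩ Q)
    (f : (Fin s → ℝ) × E → (Fin n → ℝ))
    (hf : ContDiffOn ℝ 1 f U)
    (x : (Fin s → ℝ) × E) (hxU : x ∈ U) (hx0 : x.1 = 0)
    (f' : ((Fin s → ℝ) × E) →L[ℝ] (Fin n → ℝ))
    (hf' : HasFDerivWithinAt f f' U x)
    (hsurj : Function.Surjective fun e : E => f' (0, e))
    (K : Submodule ℝ E) (hK : ∀ e : E, e ∈ K ↔ f' (0, e) = 0) :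
    (∃ L : Submodule ℝ E, IsClosed (L : Set E) ∧ IsCompl K L) ∧
    (∀ L : Submodule ℝ E, IsClosed (L : Set E) → IsCompl K L →
      ∀ pr : E →L[ℝ] E, (∀ k ∈ K, pr k = k) → (∀ l ∈ L, pr l = 0) →
      ∃ (Uhat : Set ((Fin s → ℝ) × E)) (U' : Set ((Fin n → ℝ) × (Fin s → ℝ) × E))
        (h : (Fin n → ℝ) × (Fin s → ℝ) × E → (Fin s → ℝ) × E),
        x ∈ Uhat ∧ Uhat ⊆ U ∧ (∃ V, IsOpen V ∧ Uhat = V ∩ Q) ∧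
        U' ⊆ {p | (∀ i, 0 ≤ p.2.1 i) ∧ p.2.2 ∈ K} ∧
        (∃ W, IsOpen W ∧ U' = W ∩ {p | (∀ i, 0 ≤ p.2.1 i) ∧ p.2.2 ∈ K}) ∧
        Set.BijOn (fun p => (f p, p.1, pr p.2)) Uhat U' ∧
        ContDiffOn ℝ 1 (fun p => (f p, p.1, pr p.2)) Uhat ∧
        ContDiffOn ℝ 1 h U' ∧
        (∀ p ∈ Uhat, h (f p, p.1, pr p.2) = p) ∧
        (∀ q ∈ U', (f (h q), (h q).1, pr (h q).2) = q)) := by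
  -- the restricted linear map `φ e = f' (0, e)`
  set φ : E →L[ℝ] (Fin n → ℝ) := f'.comp (ContinuousLinearMap.inr ℝ (Fin s → ℝ) E) with hφdef
  have hφ : ∀ e, φ e = f' (0, e) := fun e => rfl
  have hφsurj : Function.Surjective φ := hsurj
  constructor
  · -- existence of a closed complement
    obtain ⟨σ₀, hσ₀⟩ := φ.toLinearMap.exists_rightInverse_of_surjective
      (LinearMap.range_eq_top.2 hφsurj)
    refine ⟨LinearMap.range σ₀, Submodule.closed_of_finiteDimensional _, ?_, ?_⟩
    · rw [Submodule.disjoint_def]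
      rintro e heK ⟨a, rfl⟩
      have : φ (σ₀ a) = a := congrFun (congrArg (fun T => T.toFun) hσ₀) a
      have ha : a = 0 := by rw [← this, hφ]; exact (hK _).1 heK
      rw [ha, map_zero]
    · rw [codisjoint_iff, eq_top_iff]
      intro e _
      have hmem : e - σ₀ (φ e) ∈ K := by
        rw [hK, ← hφ, map_sub]
        have : φ (σ₀ (φ e)) = φ e := congrFun (congrArg (fun T => T.toFun) hσ₀) (φ e)
        rw [this, sub_self]
      have : e = (e - σ₀ (φ e)) + σ₀ (φ e) := by abel
      rw [this]
      exact Submodule.add_mem_sup hmem ⟨φ e, rfl⟩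
  intro L hLclosed hLcompl pr hprK hprL
  classical
  -- decomposition facts
  have hprmem : ∀ e : E, pr e ∈ K ∧ e - pr e ∈ L := by
    intro e
    have he : e ∈ K ⊔ L := by rw [hLcompl.sup_eq_top]; trivial
    obtain ⟨k, hk, l, hl, hkl⟩ := Submodule.mem_sup.1 he
    have hpre : pr e = k := by
      rw [← hkl, map_add, hprK k hk, hprL l hl, add_zero]
    constructor
    · rw [hpre]; exact hk
    · have : e - pr e = l := by rw [hpre, ← hkl]; abel
      rw [this]; exact hl
  have hprK0 : ∀ e : E, φ (pr e) = 0 := fun e => by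
    rw [hφ]; exact (hK _).1 (hprmem e).1
  -- the section σ of φ with range in L
  have hinjL : ∀ l ∈ L, φ l = 0 → l = 0 := by
    intro l hl h0
    have : l ∈ K ⊓ L := ⟨(hK l).2 ((hφ l) ▸ h0), hl⟩
    rwa [hLcompl.inf_eq_bot, Submodule.mem_bot] at this
  set lin : L →ₗ[ℝ] (Fin n → ℝ) := φ.toLinearMap.comp L.subtype with hlin
  have hlinInj : Function.Injective lin := by
    intro a b hab
    have hs : φ ((a : E) - b) = 0 := by
      rw [map_sub, sub_eq_zero]; exact hab
    have := hinjL _ (Submodule.sub_mem L a.2 b.2) hs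
    exact Subtype.ext (by rwa [sub_eq_zero] at this)
  have hlinSurj : Function.Surjective lin := by
    intro a
    obtain ⟨e, he⟩ := hφsurj a
    refine ⟨⟨e - pr e, (hprmem e).2⟩, ?_⟩
    show φ (e - pr e) = a
    rw [map_sub, hprK0, sub_zero, he]
  set ψ : L ≃ₗ[ℝ] (Fin n → ℝ) := LinearEquiv.ofBijective lin ⟨hlinInj, hlinSurj⟩ with hψ
  set σ : (Fin n → ℝ) →L[ℝ] E :=
    LinearMap.toContinuousLinearMap (L.subtype.comp ψ.symm.toLinearMap) with hσdef
  have hσval : ∀ a, σ a = (ψ.symm a : E) := fun a => rfl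
  have hσL : ∀ a, σ a ∈ L := fun a => (ψ.symm a).2
  have hφσ : ∀ a, φ (σ a) = a := by
    intro a
    have : lin (ψ.symm a) = a := ψ.apply_symm_apply a
    simpa [hσval, hlin] using this
  have hσφ : ∀ l ∈ L, σ (φ l) = l := by
    intro l hl
    have h1 : φ l = ψ ⟨l, hl⟩ := rfl
    rw [hσval, h1, ψ.symm_apply_apply]
  have hprσ : ∀ a, pr (σ a) = 0 := fun a => hprL _ (hσL a)
  -- linear algebra of A and B
  set A : ((Fin s → ℝ) × E) →L[ℝ] ((Fin n → ℝ) × (Fin s → ℝ) × E) :=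
    f'.prod ((ContinuousLinearMap.fst ℝ (Fin s → ℝ) E).prod
      (pr.comp (ContinuousLinearMap.snd ℝ (Fin s → ℝ) E))) with hAdef
  set π₁ : ((Fin n → ℝ) × (Fin s → ℝ) × E) →L[ℝ] (Fin n → ℝ) :=
    ContinuousLinearMap.fst ℝ _ _ with hπ₁
  set π₂ : ((Fin n → ℝ) × (Fin s → ℝ) × E) →L[ℝ] (Fin s → ℝ) :=
    (ContinuousLinearMap.fst ℝ (Fin s → ℝ) E).comp
      (ContinuousLinearMap.snd ℝ (Fin n → ℝ) ((Fin s → ℝ) × E)) with hπ₂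
  set π₃ : ((Fin n → ℝ) × (Fin s → ℝ) × E) →L[ℝ] E :=
    (ContinuousLinearMap.snd ℝ (Fin s → ℝ) E).comp
      (ContinuousLinearMap.snd ℝ (Fin n → ℝ) ((Fin s → ℝ) × E)) with hπ₃
  set T : ((Fin n → ℝ) × (Fin s → ℝ) × E) →L[ℝ] ((Fin s → ℝ) × E) :=
    π₂.prod (pr.comp π₃) with hTdef
  set B : ((Fin n → ℝ) × (Fin s → ℝ) × E) →L[ℝ] ((Fin s → ℝ) × E) :=
    π₂.prod (pr.comp π₃ + σ.comp (π₁ - f'.comp T)) with hBdef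
  have hAval : ∀ p : (Fin s → ℝ) × E, A p = (f' p, p.1, pr p.2) := fun p => rfl
  have hBval : ∀ z : (Fin n → ℝ) × (Fin s → ℝ) × E,
      B z = (z.2.1, pr z.2.2 + σ (z.1 - f' (z.2.1, pr z.2.2))) := fun z => rfl
  have hBA : ∀ p : (Fin s → ℝ) × E, B (A p) = p := by
    intro p
    rw [hAval, hBval]
    dsimp only
    have h1 : pr (pr p.2) = pr p.2 := hprK _ (hprmem p.2).1
    rw [h1]
    have h2 : f' p - f' (p.1, pr p.2) = φ (p.2 - pr p.2) := by
      rw [hφ, ← map_sub]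
      congr 1
      refine Prod.ext ?_ ?_
      · show p.1 - p.1 = 0; abel
      · rfl
    rw [h2, hσφ _ (hprmem p.2).2]
    refine Prod.ext rfl ?_
    show pr p.2 + (p.2 - pr p.2) = p.2
    abel
  have hAB : ∀ z : (Fin n → ℝ) × (Fin s → ℝ) × E, z.2.2 ∈ K → A (B z) = z := by
    intro z hz
    rw [hBval]
    have hpz : pr z.2.2 = z.2.2 := hprK _ hz
    rw [hpz, hAval]
    have h3 : pr (z.2.2 + σ (z.1 - f' (z.2.1, z.2.2))) = z.2.2 := by
      rw [map_add, hprK _ hz, hprσ, add_zero]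
    have h1 : f' (z.2.1, z.2.2 + σ (z.1 - f' (z.2.1, z.2.2))) = z.1 := by
      have e : (z.2.1, z.2.2 + σ (z.1 - f' (z.2.1, z.2.2))) =
          (z.2.1, z.2.2) + ((0 : Fin s → ℝ), σ (z.1 - f' (z.2.1, z.2.2))) := by
        refine Prod.ext ?_ rfl
        show z.2.1 = z.2.1 + 0; abel
      rw [e, map_add, ← hφ, hφσ]
      abel
    rw [h1, h3]
  -- the nonlinear map g
  set g : (Fin s → ℝ) × E → (Fin n → ℝ) × (Fin s → ℝ) × E :=
    fun p => (f p, p.1, pr p.2) with hgdef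
  obtain ⟨V₀, hV₀open, hUV₀⟩ := hUopen
  have hxQ : x ∈ Q := hUQ hxU
  have hxV₀ : x ∈ V₀ := by rw [hUV₀] at hxU; exact hxU.1
  have hQconv : Convex ℝ Q := by
    rw [hQ]
    intro p hp q hq a b ha hb hab
    intro i
    show (0:ℝ) ≤ (a • p + b • q).1 i
    have e : (a • p + b • q).1 i = a * p.1 i + b * q.1 i := rfl
    rw [e]
    exact add_nonneg (mul_nonneg ha (hp i)) (mul_nonneg hb (hq i))
  have hQclosed : IsClosed Q := by
    rw [hQ]
    have e : {p : (Fin s → ℝ) × E | ∀ i, 0 ≤ p.1 i} = ⋂ i, {p | 0 ≤ p.1 i} := by ext p; simp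
    rw [e]
    exact isClosed_iInter fun i =>
      isClosed_le continuous_const ((continuous_apply i).comp continuous_fst)
  have hQint : (interior Q).Nonempty := by
    refine ⟨((fun _ => 1 : Fin s → ℝ), (0 : E)), ?_⟩
    have hO : IsOpen {p : (Fin s → ℝ) × E | ∀ i, 0 < p.1 i} := by
      have e : {p : (Fin s → ℝ) × E | ∀ i, 0 < p.1 i} = ⋂ i, {p | 0 < p.1 i} := by ext p; simp
      rw [e]
      exact isOpen_iInter_of_finite fun i =>
        isOpen_lt continuous_const ((continuous_apply i).comp continuous_fst)
    exact interior_maximal (fun p hp => by rw [hQ]; exact fun i => (hp i).le) hO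
      (fun i => one_pos)
  have hQuD : UniqueDiffOn ℝ Q := uniqueDiffOn_convex hQconv hQint
  have hUuD : UniqueDiffOn ℝ U := by
    intro y hy
    have hyV₀ : y ∈ V₀ := by rw [hUV₀] at hy; exact hy.1
    rw [hUV₀, inter_comm]
    exact (hQuD y (hUQ hy)).inter (hV₀open.mem_nhds hyV₀)
  have hgC1 : ContDiffOn ℝ 1 g U :=
    hf.prodMk ((contDiff_fst.prodMk (pr.contDiff.comp contDiff_snd)).contDiffOn)
  have hgdiff : ∀ y ∈ U, HasFDerivWithinAt g (fderivWithin ℝ g U y) U y := fun y hy =>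
    ((hgC1.differentiableOn one_ne_zero) y hy).hasFDerivWithinAt
  have hgA : HasFDerivWithinAt g A U x := by
    apply HasFDerivWithinAt.prodMk hf'
    exact ((ContinuousLinearMap.fst ℝ (Fin s → ℝ) E).hasFDerivWithinAt).prodMk
      ((pr.comp (ContinuousLinearMap.snd ℝ (Fin s → ℝ) E)).hasFDerivWithinAt)
  have hQ'mem : ∀ q : (Fin n → ℝ) × (Fin s → ℝ) × E,
      q ∈ {p : (Fin n → ℝ) × (Fin s → ℝ) × E | (∀ i, 0 ≤ p.2.1 i) ∧ p.2.2 ∈ K} ↔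
      (∀ i, 0 ≤ q.2.1 i) ∧ q.2.2 ∈ K := fun q => Iff.rfl
  have hstep' : ∀ q ∈ {p : (Fin n → ℝ) × (Fin s → ℝ) × E | (∀ i, 0 ≤ p.2.1 i) ∧ p.2.2 ∈ K},
      ∀ p ∈ Q, p - B (g p - q) ∈ Q := by
    intro q hq p hp
    rw [hQ]
    intro i
    have eB : (B (g p - q)).1 = (g p - q).2.1 := rfl
    have e2 : (g p - q).2.1 = p.1 - q.2.1 := rfl
    have e1 : (p - B (g p - q)).1 = q.2.1 := by
      calc (p - B (g p - q)).1 = p.1 - (B (g p - q)).1 := rfl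
        _ = p.1 - (p.1 - q.2.1) := by rw [eB, e2]
        _ = q.2.1 := by abel
    show (0:ℝ) ≤ (p - B (g p - q)).1 i
    rw [e1]
    exact hq.1 i
  have hABg' : ∀ q ∈ {p : (Fin n → ℝ) × (Fin s → ℝ) × E | (∀ i, 0 ≤ p.2.1 i) ∧ p.2.2 ∈ K},
      ∀ p : (Fin s → ℝ) × E, A (B (g p - q)) = g p - q := by
    intro q hq p
    exact hAB _ (Submodule.sub_mem K (hprmem p.2).1 hq.2)
  have hgQ' : ∀ p ∈ Q, g p ∈ {p : (Fin n → ℝ) × (Fin s → ℝ) × E | (∀ i, 0 ≤ p.2.1 i) ∧ p.2.2 ∈ K} := by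
    intro p hp
    refine ⟨?_, (hprmem p.2).1⟩
    rw [hQ] at hp; exact hp
  obtain ⟨Uhat, U', h, h1, h2, h3, h4, h5, h6, h7, h8, h9, h10⟩ :=
    quadrant_ift Q hQconv hQclosed U hUQ V₀ hV₀open hUV₀ hUuD g hgC1 x hxU A hgA B hBA
      _ hgQ' hstep' hABg'
  exact ⟨Uhat, U', h, h1, h2, h3, h4, h5, h6, h7, h8, h9, h10⟩
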